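/- Let f(s) = 1 − s for s ∈ [0,1], and for γ > 0 let u(γ) = u(γ, f) and σ²(γ) = σ²(γ, f) be the corresponding global location and limiting variance. Then lim_{γ→+∞} γ·u(γ) = log 2 and lim_{γ→+∞} γ·σ²(γ) = 1/2. -/

import Mathlib

open MeasureTheory Filter Set
open scoped Topology

/-- Piecewise continuity on `[0,1]`: continuity within `[0,1]` away from a finite set. -/
def PiecewiseContinuousOn (f : ℝ → ℝ) : Prop :=
  ∃ S : Finset ℝ, ∀ x ∈ Set.Icc (0:ℝ) 1, x ∉ S → ContinuousWithinAt f (Set.Icc (0:ℝ) 1) x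

/-- The global location `u(γ, f)`. -/
noncomputable def uLoc (γ : ℝ) (f : ℝ → ℝ) : ℝ :=
  (1/γ) * Real.log ((∫ s in (0:ℝ)..1, Real.exp (γ * s)) /
    (∫ s in (0:ℝ)..1, Real.exp (γ * (s - f s))))

/-- The limiting variance `σ²(γ, f)`. -/
noncomputable def sigmaSq (γ : ℝ) (f : ℝ → ℝ) : ℝ :=
  (1/(Real.exp γ - 1)^2) *
    ∫ s in (0:ℝ)..1,
      (Real.exp (2*γ*(uLoc γ f + s - f s)) - Real.exp (2*γ*s))

lemma int_exp_lin (c d : ℝ) (hc : c ≠ 0) :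
    (∫ s in (0:ℝ)..1, Real.exp (c * s + d)) = Real.exp d * (Real.exp c - 1) / c := by
  have h : ∀ s : ℝ, Real.exp (c * s + d) = Real.exp d * Real.exp (c * s) := by
    intro s; rw [Real.exp_add, mul_comm]
  simp_rw [h]
  rw [intervalIntegral.integral_const_mul,
    intervalIntegral.integral_comp_mul_left (fun x => Real.exp x) hc]
  simp [integral_exp]
  ring

lemma uLoc_eq (γ : ℝ) (hγ : 0 < γ) :
    γ * uLoc γ (fun s => 1 - s) =
      Real.log (2 * Real.exp γ / (Real.exp γ + 1)) := by
  have hγ0 : γ ≠ 0 := ne_of_gt hγ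
  have hx1 : 1 < Real.exp γ := Real.one_lt_exp_iff.2 hγ
  have hA : (∫ s in (0:ℝ)..1, Real.exp (γ * s)) = (Real.exp γ - 1) / γ := by
    have := int_exp_lin γ 0 hγ0
    simpa using this
  have hB : (∫ s in (0:ℝ)..1, Real.exp (γ * (s - (1 - s))))
      = Real.exp (-γ) * (Real.exp (2*γ) - 1) / (2*γ) := by
    have h : ∀ s : ℝ, γ * (s - (1 - s)) = (2*γ) * s + (-γ) := fun s => by ring
    simp_rw [h]
    exact int_exp_lin (2*γ) (-γ) (by positivity)
  have hratio : ((Real.exp γ - 1) / γ) / (Real.exp (-γ) * (Real.exp (2*γ) - 1) / (2*γ))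
      = 2 * Real.exp γ / (Real.exp γ + 1) := by
    have h2 : Real.exp (2*γ) = Real.exp γ ^ 2 := by
      rw [two_mul, Real.exp_add]; ring
    rw [h2, Real.exp_neg]
    have e1 : Real.exp γ - 1 ≠ 0 := by nlinarith
    have e2 : Real.exp γ + 1 ≠ 0 := by nlinarith
    have e3 : Real.exp γ ≠ 0 := Real.exp_ne_zero γ
    have e4 : Real.exp γ ^ 2 - 1 = (Real.exp γ - 1) * (Real.exp γ + 1) := by ring
    field_simp
    rw [e4]
    exact div_self (mul_ne_zero e1 e2)
  unfold uLoc
  rw [hA, hB, hratio]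
  field_simp

lemma sigmaSq_eq (γ : ℝ) (hγ : 0 < γ) :
    γ * sigmaSq γ (fun s => 1 - s) =
      (Real.exp γ - 1) / (2 * (Real.exp γ + 1)) := by
  have hγ0 : γ ≠ 0 := ne_of_gt hγ
  have hx1 : 1 < Real.exp γ := Real.one_lt_exp_iff.2 hγ
  set u := uLoc γ (fun s => 1 - s) with hu
  have hL : γ * u = Real.log (2 * Real.exp γ / (Real.exp γ + 1)) := uLoc_eq γ hγ
  have hRpos : (0:ℝ) < 2 * Real.exp γ / (Real.exp γ + 1) := by positivity
  have hexpL : Real.exp (γ * u) = 2 * Real.exp γ / (Real.exp γ + 1) := by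
    rw [hL, Real.exp_log hRpos]
  have hI1 : (∫ s in (0:ℝ)..1, Real.exp (2*γ*(u + s - (1 - s))))
      = Real.exp (2*γ*u - 2*γ) * (Real.exp (4*γ) - 1) / (4*γ) := by
    have h : ∀ s : ℝ, 2*γ*(u + s - (1 - s)) = (4*γ) * s + (2*γ*u - 2*γ) := fun s => by ring
    simp_rw [h]
    exact int_exp_lin (4*γ) _ (by positivity)
  have hI2 : (∫ s in (0:ℝ)..1, Real.exp (2*γ*s)) = (Real.exp (2*γ) - 1) / (2*γ) := by
    have h := int_exp_lin (2*γ) 0 (by positivity)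
    simpa [mul_assoc] using h
  have hsplit : (∫ s in (0:ℝ)..1,
      (Real.exp (2*γ*(u + s - (1 - s))) - Real.exp (2*γ*s)))
      = (∫ s in (0:ℝ)..1, Real.exp (2*γ*(u + s - (1 - s))))
        - ∫ s in (0:ℝ)..1, Real.exp (2*γ*s) := by
    apply intervalIntegral.integral_sub
    · exact (Continuous.intervalIntegrable (by continuity) _ _)
    · exact (Continuous.intervalIntegrable (by continuity) _ _)
  have hE : Real.exp (2*γ*u - 2*γ)
      = (2 * Real.exp γ / (Real.exp γ + 1))^2 * (Real.exp γ)⁻¹ * (Real.exp γ)⁻¹ := by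
    have : 2*γ*u - 2*γ = (γ*u) + (γ*u) + (-γ) + (-γ) := by ring
    rw [this, Real.exp_add, Real.exp_add, Real.exp_add, hexpL, Real.exp_neg]
    ring
  have h2 : Real.exp (2*γ) = Real.exp γ ^ 2 := by rw [two_mul, Real.exp_add]; ring
  have h4 : Real.exp (4*γ) = Real.exp γ ^ 4 := by
    rw [show (4:ℝ)*γ = γ+γ+γ+γ by ring, Real.exp_add, Real.exp_add, Real.exp_add]; ring
  unfold sigmaSq
  rw [← hu, hsplit, hI1, hI2, hE, h2, h4]
  have e1 : Real.exp γ - 1 ≠ 0 := by nlinarith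
  have e2 : Real.exp γ + 1 ≠ 0 := by nlinarith
  have e3 : Real.exp γ ≠ 0 := Real.exp_ne_zero γ
  field_simp
  ring

/-- for `f(s) = 1 − s`, `γ·u(γ) → log 2` and `γ·σ²(γ) → 1/2` as `γ → +∞`. -/
theorem asymptotics_linear_profile :
    Tendsto (fun γ : ℝ => γ * uLoc γ (fun s => 1 - s)) atTop (𝓝 (Real.log 2)) ∧
    Tendsto (fun γ : ℝ => γ * sigmaSq γ (fun s => 1 - s)) atTop (𝓝 (1/2)) := by
  have hev : ∀ᶠ γ : ℝ in atTop, (0:ℝ) < γ := eventually_gt_atTop 0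
  have hexp0 : Tendsto (fun γ : ℝ => Real.exp (-γ)) atTop (𝓝 0) := by
    simpa using Real.tendsto_exp_neg_atTop_nhds_zero
  constructor
  · have h1 : Tendsto (fun γ : ℝ => 2 * Real.exp γ / (Real.exp γ + 1)) atTop (𝓝 2) := by
      have heq : ∀ γ : ℝ, 2 * Real.exp γ / (Real.exp γ + 1) = 2 / (1 + Real.exp (-γ)) := by
        intro γ
        rw [Real.exp_neg]
        have e3 : Real.exp γ ≠ 0 := Real.exp_ne_zero γ
        have e2 : Real.exp γ + 1 ≠ 0 := by positivity
        field_simp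
      simp_rw [heq]
      have : Tendsto (fun γ : ℝ => 1 + Real.exp (-γ)) atTop (𝓝 1) := by
        simpa using tendsto_const_nhds.add hexp0
      have := (tendsto_const_nhds (x := (2:ℝ))).div this (by norm_num)
      simpa [Pi.div_def] using this
    have h2 := (Real.continuousAt_log (by norm_num : (2:ℝ) ≠ 0)).tendsto.comp h1
    apply Tendsto.congr' _ h2
    filter_upwards [hev] with γ hγ
    exact (uLoc_eq γ hγ).symm
  · have h1 : Tendsto (fun γ : ℝ => (Real.exp γ - 1) / (2 * (Real.exp γ + 1))) atTop
        (𝓝 (1/2)) := by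
      have heq : ∀ γ : ℝ, (Real.exp γ - 1) / (2 * (Real.exp γ + 1))
          = (1 - Real.exp (-γ)) / (2 * (1 + Real.exp (-γ))) := by
        intro γ
        rw [Real.exp_neg]
        have e3 : Real.exp γ ≠ 0 := Real.exp_ne_zero γ
        have e2 : Real.exp γ + 1 ≠ 0 := by positivity
        field_simp
      simp_rw [heq]
      have hnum : Tendsto (fun γ : ℝ => 1 - Real.exp (-γ)) atTop (𝓝 1) := by
        simpa using tendsto_const_nhds.sub hexp0
      have hden : Tendsto (fun γ : ℝ => 2 * (1 + Real.exp (-γ))) atTop (𝓝 2) := by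
        have : Tendsto (fun γ : ℝ => 1 + Real.exp (-γ)) atTop (𝓝 1) := by
          simpa using tendsto_const_nhds.add hexp0
        simpa using tendsto_const_nhds.mul this
      simpa [Pi.div_def] using hnum.div hden (by norm_num)
    apply Tendsto.congr' _ h1
    filter_upwards [hev] with γ hγ
    exact (sigmaSq_eq γ hγ).symm
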